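/- Uniform lower bound for the convexified control blocks (Lemma 5.6): Assume uniform SOSC with constant γ > 0, and let δ ∈ (0, γ). Then the convexification recursion with parameter δ satisfies R̃_k(δ) ⪰ γI for all k = 0,…,N−1. -/

import Mathlib

open Matrix BigOperators Finset

/-- The Euclidean norm of a vector in `ℝ^n`. -/
noncomputable def evNorm {n : ℕ} (x : Fin n → ℝ) : ℝ :=
  ‖(EuclideanSpace.equiv (Fin n) ℝ).symm x‖

/-- Uniform SOSC with constant `γ`. -/
def USOSC {nx nu : ℕ} (N : ℕ) (γ : ℝ)
    (A : ℕ → Matrix (Fin nx) (Fin nx) ℝ) (B : ℕ → Matrix (Fin nx) (Fin nu) ℝ)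
    (Q : ℕ → Matrix (Fin nx) (Fin nx) ℝ) (R : ℕ → Matrix (Fin nu) (Fin nu) ℝ)
    (S : ℕ → Matrix (Fin nu) (Fin nx) ℝ) : Prop :=
  ∀ (p : ℕ → Fin nx → ℝ) (q : ℕ → Fin nu → ℝ),
    p 0 = 0 → (∀ k < N, p (k + 1) = A k *ᵥ p k + B k *ᵥ q k) →
    γ * ((∑ k ∈ range (N + 1), evNorm (p k) ^ 2) + ∑ k ∈ range N, evNorm (q k) ^ 2)
      ≤ (∑ k ∈ range N,
          (p k ⬝ᵥ Q k *ᵥ p k + 2 * (q k ⬝ᵥ S k *ᵥ p k) + q k ⬝ᵥ R k *ᵥ q k))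
        + p N ⬝ᵥ Q N *ᵥ p N

/-- **Uniform lower bound for the convexified control blocks (Lemma 5.6).**
Under uniform SOSC with constant `γ > 0`, for every `δ ∈ (0, γ)` the convexification
recursion with parameter `δ` satisfies `R̃_k(δ) ⪰ γI` for all `k < N`. -/
lemma evNorm_sq {n : ℕ} (x : Fin n → ℝ) : evNorm x ^ 2 = x ⬝ᵥ x := by
  rw [evNorm, EuclideanSpace.norm_eq, Real.sq_sqrt (by positivity)]
  simp [dotProduct, sq]

lemma dp_transpose {m n : ℕ} (M : Matrix (Fin n) (Fin m) ℝ) (x : Fin m → ℝ) (y : Fin n → ℝ) :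
    x ⬝ᵥ (Mᵀ *ᵥ y) = (M *ᵥ x) ⬝ᵥ y := by
  rw [Matrix.dotProduct_mulVec, Matrix.vecMul_transpose]

lemma dp_sandwich {a b c : ℕ} (X : Matrix (Fin c) (Fin a) ℝ) (M : Matrix (Fin c) (Fin c) ℝ)
    (Y : Matrix (Fin c) (Fin b) ℝ) (x : Fin a → ℝ) (y : Fin b → ℝ) :
    (X *ᵥ x) ⬝ᵥ (M *ᵥ (Y *ᵥ y)) = x ⬝ᵥ ((Xᵀ * M * Y) *ᵥ y) := by
  rw [Matrix.mul_assoc, ← Matrix.mulVec_mulVec, dp_transpose, Matrix.mulVec_mulVec]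

lemma dp_swap {m n : ℕ} (M : Matrix (Fin m) (Fin n) ℝ) (x : Fin m → ℝ) (y : Fin n → ℝ) :
    x ⬝ᵥ (M *ᵥ y) = y ⬝ᵥ (Mᵀ *ᵥ x) := by
  rw [dp_transpose, dotProduct_comm]

lemma sandwich_symm {m n : ℕ} {M : Matrix (Fin n) (Fin n) ℝ} (hM : M.IsSymm)
    (B : Matrix (Fin n) (Fin m) ℝ) : (Bᵀ * M * B).IsSymm := by
  rw [Matrix.IsSymm] at hM ⊢
  rw [Matrix.transpose_mul, Matrix.transpose_mul, Matrix.transpose_transpose, hM, Matrix.mul_assoc]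

/-- Single-stage completion-of-squares identity. -/
lemma stage_identity {nx nu : ℕ}
    (A : Matrix (Fin nx) (Fin nx) ℝ) (B : Matrix (Fin nx) (Fin nu) ℝ)
    (Q : Matrix (Fin nx) (Fin nx) ℝ) (R : Matrix (Fin nu) (Fin nu) ℝ)
    (S : Matrix (Fin nu) (Fin nx) ℝ)
    (Qb' Qb Qt : Matrix (Fin nx) (Fin nx) ℝ) (Rt : Matrix (Fin nu) (Fin nu) ℝ)
    (St : Matrix (Fin nu) (Fin nx) ℝ) (δ : ℝ)
    (hQb'symm : Qb'.IsSymm) (hRtsymm : Rt.IsSymm)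
    (hRt : Rt = R + Bᵀ * Qb' * B) (hSt : St = S + Bᵀ * Qb' * A)
    (hQt : Qt = Stᵀ * Rt⁻¹ * St + δ • (1 : Matrix (Fin nx) (Fin nx) ℝ))
    (hQb : Qb = Q + Aᵀ * Qb' * A - Qt)
    (hinv1 : Rt⁻¹ * Rt = 1) (hinv2 : Rt * Rt⁻¹ = 1)
    (p : Fin nx → ℝ) (q : Fin nu → ℝ) (hq : q = -((Rt⁻¹ * St) *ᵥ p)) :
    p ⬝ᵥ Q *ᵥ p + 2 * (q ⬝ᵥ S *ᵥ p) + q ⬝ᵥ R *ᵥ q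
      + (A *ᵥ p + B *ᵥ q) ⬝ᵥ Qb' *ᵥ (A *ᵥ p + B *ᵥ q)
    = p ⬝ᵥ Qb *ᵥ p + δ * (p ⬝ᵥ p) := by
  have hKt : (Rt⁻¹ * St)ᵀ = Stᵀ * Rt⁻¹ := by
    rw [Matrix.transpose_mul, Matrix.transpose_nonsing_inv, hRtsymm.eq]
  have hG1 : (Rt⁻¹ * St)ᵀ * St = Stᵀ * Rt⁻¹ * St := by rw [hKt]
  have hG2 : (Rt⁻¹ * St)ᵀ * Rt * (Rt⁻¹ * St) = Stᵀ * Rt⁻¹ * St := by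
    rw [hKt, Matrix.mul_assoc (Stᵀ * Rt⁻¹) Rt _, ← Matrix.mul_assoc Rt _ _, hinv2, Matrix.one_mul]
  have e1 : (A *ᵥ p + B *ᵥ q) ⬝ᵥ Qb' *ᵥ (A *ᵥ p + B *ᵥ q)
      = p ⬝ᵥ ((Aᵀ * Qb' * A) *ᵥ p) + 2 * (q ⬝ᵥ ((Bᵀ * Qb' * A) *ᵥ p))
        + q ⬝ᵥ ((Bᵀ * Qb' * B) *ᵥ q) := by
    rw [Matrix.mulVec_add, dotProduct_add, add_dotProduct,
      add_dotProduct, dp_sandwich, dp_sandwich, dp_sandwich, dp_sandwich]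
    have htr : (Aᵀ * Qb' * B)ᵀ = Bᵀ * Qb' * A := by
      rw [Matrix.transpose_mul, Matrix.transpose_mul, Matrix.transpose_transpose,
        hQb'symm, ← Matrix.mul_assoc]
    have hcross : p ⬝ᵥ ((Aᵀ * Qb' * B) *ᵥ q) = q ⬝ᵥ ((Bᵀ * Qb' * A) *ᵥ p) := by
      rw [dp_swap, htr]
    rw [hcross]; ring
  have e2 : q ⬝ᵥ (S *ᵥ p) + q ⬝ᵥ ((Bᵀ * Qb' * A) *ᵥ p) = q ⬝ᵥ (St *ᵥ p) := by
    rw [hSt, Matrix.add_mulVec, dotProduct_add]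
  have e3 : q ⬝ᵥ (R *ᵥ q) + q ⬝ᵥ ((Bᵀ * Qb' * B) *ᵥ q) = q ⬝ᵥ (Rt *ᵥ q) := by
    rw [hRt, Matrix.add_mulVec, dotProduct_add]
  have e4 : q ⬝ᵥ (St *ᵥ p) = -(p ⬝ᵥ ((Stᵀ * Rt⁻¹ * St) *ᵥ p)) := by
    rw [hq, neg_dotProduct, ← dp_transpose, Matrix.mulVec_mulVec, hG1]
  have e5 : q ⬝ᵥ (Rt *ᵥ q) = p ⬝ᵥ ((Stᵀ * Rt⁻¹ * St) *ᵥ p) := by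
    rw [hq, Matrix.mulVec_neg, neg_dotProduct, dotProduct_neg, neg_neg,
      dp_sandwich, hG2]
  have e6 : p ⬝ᵥ (Qb *ᵥ p)
      = p ⬝ᵥ (Q *ᵥ p) + p ⬝ᵥ ((Aᵀ * Qb' * A) *ᵥ p)
        - p ⬝ᵥ ((Stᵀ * Rt⁻¹ * St) *ᵥ p) - δ * (p ⬝ᵥ p) := by
    rw [hQb, hQt, Matrix.sub_mulVec, Matrix.add_mulVec, Matrix.add_mulVec,
      dotProduct_sub, dotProduct_add, dotProduct_add,
      Matrix.smul_mulVec, Matrix.one_mulVec, dotProduct_smul, smul_eq_mul]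
    ring
  linear_combination e1 + 2 * e2 + e3 + 2 * e4 + e5 - e6

noncomputable def ctrl {nx nu : ℕ} (k : ℕ) (v : Fin nu → ℝ)
    (Rt : ℕ → Matrix (Fin nu) (Fin nu) ℝ) (St : ℕ → Matrix (Fin nu) (Fin nx) ℝ)
    (j : ℕ) (w : Fin nx → ℝ) : Fin nu → ℝ :=
  if j < k then 0 else if j = k then v else -(((Rt j)⁻¹ * St j) *ᵥ w)

noncomputable def ptraj {nx nu : ℕ} (A : ℕ → Matrix (Fin nx) (Fin nx) ℝ)
    (B : ℕ → Matrix (Fin nx) (Fin nu) ℝ)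
    (Rt : ℕ → Matrix (Fin nu) (Fin nu) ℝ) (St : ℕ → Matrix (Fin nu) (Fin nx) ℝ)
    (k : ℕ) (v : Fin nu → ℝ) : ℕ → Fin nx → ℝ
  | 0 => 0
  | (j + 1) => A j *ᵥ ptraj A B Rt St k v j
      + B j *ᵥ ctrl k v Rt St j (ptraj A B Rt St k v j)

noncomputable def qtraj {nx nu : ℕ} (A : ℕ → Matrix (Fin nx) (Fin nx) ℝ)
    (B : ℕ → Matrix (Fin nx) (Fin nu) ℝ)
    (Rt : ℕ → Matrix (Fin nu) (Fin nu) ℝ) (St : ℕ → Matrix (Fin nu) (Fin nx) ℝ)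
    (k : ℕ) (v : Fin nu → ℝ) (j : ℕ) : Fin nu → ℝ :=
  ctrl k v Rt St j (ptraj A B Rt St k v j)

lemma ptraj_succ {nx nu : ℕ} (A : ℕ → Matrix (Fin nx) (Fin nx) ℝ)
    (B : ℕ → Matrix (Fin nx) (Fin nu) ℝ)
    (Rt : ℕ → Matrix (Fin nu) (Fin nu) ℝ) (St : ℕ → Matrix (Fin nu) (Fin nx) ℝ)
    (k : ℕ) (v : Fin nu → ℝ) (j : ℕ) :
    ptraj A B Rt St k v (j + 1)
      = A j *ᵥ ptraj A B Rt St k v j + B j *ᵥ qtraj A B Rt St k v j := rfl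

lemma ptraj_zero {nx nu : ℕ} (A : ℕ → Matrix (Fin nx) (Fin nx) ℝ)
    (B : ℕ → Matrix (Fin nx) (Fin nu) ℝ)
    (Rt : ℕ → Matrix (Fin nu) (Fin nu) ℝ) (St : ℕ → Matrix (Fin nu) (Fin nx) ℝ)
    (k : ℕ) (v : Fin nu → ℝ) : ptraj A B Rt St k v 0 = 0 := rfl

theorem convexified_R_uniform_lower_bound
    (N nx nu : ℕ) (hN : 1 ≤ N) (hnx : 1 ≤ nx) (hnu : 1 ≤ nu)
    (γ δ : ℝ) (hγ : 0 < γ) (hδ0 : 0 < δ) (hδγ : δ < γ)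
    (A : ℕ → Matrix (Fin nx) (Fin nx) ℝ) (B : ℕ → Matrix (Fin nx) (Fin nu) ℝ)
    (Q : ℕ → Matrix (Fin nx) (Fin nx) ℝ) (R : ℕ → Matrix (Fin nu) (Fin nu) ℝ)
    (S : ℕ → Matrix (Fin nu) (Fin nx) ℝ)
    (hQsymm : ∀ k ≤ N, (Q k).IsSymm) (hRsymm : ∀ k < N, (R k).IsSymm)
    (husosc : USOSC N γ A B Q R S)
    (Qbar : ℕ → Matrix (Fin nx) (Fin nx) ℝ) (Rt : ℕ → Matrix (Fin nu) (Fin nu) ℝ)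
    (St : ℕ → Matrix (Fin nu) (Fin nx) ℝ) (Qt : ℕ → Matrix (Fin nx) (Fin nx) ℝ)
    (hQbarN : Qbar N = Q N - δ • (1 : Matrix (Fin nx) (Fin nx) ℝ))
    (hRt : ∀ k < N, Rt k = R k + (B k)ᵀ * Qbar (k + 1) * B k)
    (hSt : ∀ k < N, St k = S k + (B k)ᵀ * Qbar (k + 1) * A k)
    (hQt : ∀ k < N, Qt k = (St k)ᵀ * (Rt k)⁻¹ * St k
      + δ • (1 : Matrix (Fin nx) (Fin nx) ℝ))
    (hQbar : ∀ k < N, Qbar k = Q k + (A k)ᵀ * Qbar (k + 1) * A k - Qt k) :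
    ∀ k < N, (Rt k - γ • (1 : Matrix (Fin nu) (Fin nu) ℝ)).PosSemidef := by
  -- symmetry of Qbar
  have hQbarSymm : ∀ d j, j + d = N → (Qbar j).IsSymm := by
    intro d
    induction d with
    | zero =>
      intro j hj
      have hjN : j = N := by omega
      subst hjN
      rw [hQbarN]
      exact (hQsymm j le_rfl).sub (Matrix.isSymm_one.smul δ)
    | succ d ih =>
      intro j hj
      have hjN : j < N := by omega
      have h1 : (Qbar (j + 1)).IsSymm := ih (j + 1) (by omega)
      have hRs : (Rt j).IsSymm := by
        rw [hRt j hjN]; exact (hRsymm j hjN).add (sandwich_symm h1 _)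
      have hRinv : ((Rt j)⁻¹).IsSymm := by
        rw [Matrix.IsSymm, Matrix.transpose_nonsing_inv, hRs]
      have hQts : (Qt j).IsSymm := by
        rw [hQt j hjN]
        exact (sandwich_symm hRinv (St j)).add (Matrix.isSymm_one.smul δ)
      rw [hQbar j hjN]
      exact ((hQsymm j hjN.le).add (sandwich_symm h1 _)).sub hQts
  have hQbS : ∀ j ≤ N, (Qbar j).IsSymm := fun j hj => hQbarSymm (N - j) j (by omega)
  have hRtS : ∀ j < N, (Rt j).IsSymm := by
    intro j hj
    rw [hRt j hj]
    exact (hRsymm j hj).add (sandwich_symm (hQbS (j + 1) (by omega)) _)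
  -- main downward induction
  have main : ∀ m k, k < N → N - k ≤ m → (Rt k - γ • 1).PosSemidef := by
    intro m
    induction m with
    | zero => intro k hk hm; omega
    | succ m ih =>
      intro k hk _hm
      have IH : ∀ j, k < j → j < N → (Rt j - γ • 1).PosSemidef :=
        fun j h1 h2 => ih j h2 (by omega)
      have hPD : ∀ j, k < j → j < N → (Rt j).PosDef := by
        intro j h1 h2
        refine Matrix.posDef_iff_dotProduct_mulVec.mpr ⟨?_, ?_⟩
        · rw [Matrix.IsHermitian, Matrix.conjTranspose_eq_transpose_of_trivial, hRtS j h2]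
        · intro x hx
          have h3 := (IH j h1 h2).dotProduct_mulVec_nonneg x
          simp only [star_trivial, Matrix.sub_mulVec, Matrix.smul_mulVec,
            Matrix.one_mulVec, dotProduct_sub, dotProduct_smul,
            smul_eq_mul] at h3 ⊢
          have h0 : x ⬝ᵥ x ≠ 0 := fun h => hx (dotProduct_self_eq_zero.mp h)
          have hnn : (0:ℝ) ≤ x ⬝ᵥ x := by rw [← evNorm_sq]; positivity
          have hxx : (0:ℝ) < x ⬝ᵥ x := lt_of_le_of_ne hnn (Ne.symm h0)
          nlinarith [mul_pos hγ hxx]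
      refine Matrix.posSemidef_iff_dotProduct_mulVec.mpr ⟨?_, ?_⟩
      · rw [Matrix.IsHermitian, Matrix.conjTranspose_eq_transpose_of_trivial]
        exact (hRtS k hk).sub (Matrix.isSymm_one.smul γ)
      · intro x
        set p : ℕ → Fin nx → ℝ := ptraj A B Rt St k x with hpdef
        set q : ℕ → Fin nu → ℝ := qtraj A B Rt St k x with hqdef
        have hpstep : ∀ j, p (j + 1) = A j *ᵥ p j + B j *ᵥ q j := fun j => rfl
        have hqpre : ∀ j, j < k → q j = 0 := by
          intro j hj; rw [hqdef]; unfold qtraj ctrl; rw [if_pos hj]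
        have hqk : q k = x := by
          rw [hqdef]; unfold qtraj ctrl; rw [if_neg (lt_irrefl k), if_pos rfl]
        have hqpost : ∀ j, k < j → q j = -(((Rt j)⁻¹ * St j) *ᵥ p j) := by
          intro j hj; rw [hqdef]; unfold qtraj ctrl
          rw [if_neg (by omega), if_neg (by omega)]
        have hpzero : ∀ j, j ≤ k → p j = 0 := by
          intro j
          induction j with
          | zero => intro _; rfl
          | succ i ihp =>
            intro hik
            rw [hpstep i, ihp (by omega), hqpre i (by omega)]
            simp
        have hsosc := husosc p q (ptraj_zero A B Rt St k x) (fun j _ => hpstep j)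
        simp only [evNorm_sq] at hsosc
        -- telescoping identity
        have hT : ∀ d j, j + d = N → k + 1 ≤ j →
            (∑ i ∈ Ico j N,
              (p i ⬝ᵥ Q i *ᵥ p i + 2 * (q i ⬝ᵥ S i *ᵥ p i) + q i ⬝ᵥ R i *ᵥ q i))
              + p N ⬝ᵥ Q N *ᵥ p N
            = p j ⬝ᵥ Qbar j *ᵥ p j + δ * ∑ i ∈ Icc j N, p i ⬝ᵥ p i := by
          intro d
          induction d with
          | zero =>
            intro j hj _hjk
            have hjN : j = N := by omega
            subst hjN
            rw [Finset.Ico_self, Finset.sum_empty, zero_add, Finset.Icc_self,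
              Finset.sum_singleton, hQbarN, Matrix.sub_mulVec, dotProduct_sub,
              Matrix.smul_mulVec, Matrix.one_mulVec, dotProduct_smul,
              smul_eq_mul]
            ring
          | succ d ihd =>
            intro j hj hjk
            have hjN : j < N := by omega
            rw [Finset.sum_eq_sum_Ico_succ_bot hjN, add_assoc,
              ihd (j + 1) (by omega) (by omega)]
            have hIcc : ∑ i ∈ Icc j N, p i ⬝ᵥ p i
                = p j ⬝ᵥ p j + ∑ i ∈ Icc (j + 1) N, p i ⬝ᵥ p i := by
              rw [← Finset.Ico_add_one_right_eq_Icc, Finset.sum_eq_sum_Ico_succ_bot (by omega),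
                Finset.Ico_add_one_right_eq_Icc]
            rw [hIcc]
            have hdetj : IsUnit (Rt j).det := (hPD j (by omega) hjN).det_pos.ne'.isUnit
            have hSI := stage_identity (A j) (B j) (Q j) (R j) (S j) (Qbar (j + 1))
              (Qbar j) (Qt j) (Rt j) (St j) δ (hQbS (j + 1) (by omega)) (hRtS j hjN)
              (hRt j hjN) (hSt j hjN) (hQt j hjN) (hQbar j hjN)
              (Matrix.nonsing_inv_mul _ hdetj) (Matrix.mul_nonsing_inv _ hdetj)
              (p j) (q j) (hqpost j (by omega))
            rw [hpstep j]
            linear_combination hSI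
        have hT' := hT (N - (k + 1)) (k + 1) (by omega) le_rfl
        have hpk1 : p (k + 1) = B k *ᵥ x := by
          rw [hpstep k, hpzero k le_rfl, hqk]; simp
        have hsplitP : ∑ j ∈ range (N + 1), p j ⬝ᵥ p j
            = ∑ j ∈ Icc (k + 1) N, p j ⬝ᵥ p j := by
          rw [range_eq_Ico,
            ← Finset.sum_Ico_consecutive _ (Nat.zero_le (k + 1)) (by omega : k + 1 ≤ N + 1)]
          have hz : ∑ j ∈ Ico 0 (k + 1), p j ⬝ᵥ p j = 0 :=
            Finset.sum_eq_zero fun j hj => by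
              rw [hpzero j (by have := (Finset.mem_Ico.mp hj).2; omega),
                zero_dotProduct]
          rw [hz, zero_add, Finset.Ico_add_one_right_eq_Icc]
        have hsplitS : ∑ j ∈ range N,
              (p j ⬝ᵥ Q j *ᵥ p j + 2 * (q j ⬝ᵥ S j *ᵥ p j) + q j ⬝ᵥ R j *ᵥ q j)
            = x ⬝ᵥ R k *ᵥ x + ∑ j ∈ Ico (k + 1) N,
              (p j ⬝ᵥ Q j *ᵥ p j + 2 * (q j ⬝ᵥ S j *ᵥ p j) + q j ⬝ᵥ R j *ᵥ q j) := by
          rw [range_eq_Ico, ← Finset.sum_Ico_consecutive _ (Nat.zero_le k) hk.le,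
            Finset.sum_eq_sum_Ico_succ_bot hk]
          have h1 : ∑ j ∈ Ico 0 k,
              (p j ⬝ᵥ Q j *ᵥ p j + 2 * (q j ⬝ᵥ S j *ᵥ p j) + q j ⬝ᵥ R j *ᵥ q j) = 0 :=
            Finset.sum_eq_zero fun j hj => by
              have hjk : j < k := (Finset.mem_Ico.mp hj).2
              rw [hpzero j hjk.le, hqpre j hjk]; simp
          have h2 : p k ⬝ᵥ Q k *ᵥ p k + 2 * (q k ⬝ᵥ S k *ᵥ p k) + q k ⬝ᵥ R k *ᵥ q k
              = x ⬝ᵥ R k *ᵥ x := by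
            rw [hpzero k le_rfl, hqk]; simp
          rw [h1, zero_add, h2]
        have hqlb : x ⬝ᵥ x ≤ ∑ j ∈ range N, q j ⬝ᵥ q j := by
          have hs := Finset.single_le_sum (f := fun j => q j ⬝ᵥ q j)
            (fun j _ => by
              show (0:ℝ) ≤ q j ⬝ᵥ q j
              rw [← evNorm_sq]; positivity) (Finset.mem_range.mpr hk)
          simpa only [hqk] using hs
        have hPnn : (0:ℝ) ≤ ∑ j ∈ Icc (k + 1) N, p j ⬝ᵥ p j :=
          Finset.sum_nonneg fun j _ => by rw [← evNorm_sq]; positivity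
        have hBx : p (k + 1) ⬝ᵥ Qbar (k + 1) *ᵥ p (k + 1)
            = x ⬝ᵥ (((B k)ᵀ * Qbar (k + 1) * B k) *ᵥ x) := by
          rw [hpk1, dp_sandwich]
        have hRtk : x ⬝ᵥ Rt k *ᵥ x
            = x ⬝ᵥ R k *ᵥ x + x ⬝ᵥ (((B k)ᵀ * Qbar (k + 1) * B k) *ᵥ x) := by
          rw [hRt k hk, Matrix.add_mulVec, dotProduct_add]
        simp only [star_trivial, Matrix.sub_mulVec, Matrix.smul_mulVec,
          Matrix.one_mulVec, dotProduct_sub, dotProduct_smul, smul_eq_mul]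
        rw [hsplitP, hsplitS] at hsosc
        nlinarith [hsosc, hT', hBx, hRtk, hPnn,
          mul_le_mul_of_nonneg_left hqlb hγ.le,
          mul_nonneg (sub_nonneg.mpr hδγ.le) hPnn]
  intro k hk
  exact main N k hk (by omega)
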